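/- A point X (normalized barycentric coordinates, K = diag(S_A, S_B, S_C), G the centroid) lies on the nine-point circle of triangle ABC if and only if X K Xᵀ − (3/2) G K Xᵀ = 0. -/

import Mathlib

open scoped RealInnerProductSpace

noncomputable section

abbrev Pt := EuclideanSpace ℝ (Fin 2)

/-- Signed area of triangle XYZ in the plane. -/
def sArea (X Y Z : Pt) : ℝ :=
  ((Y 0 - X 0) * (Z 1 - X 1) - (Z 0 - X 0) * (Y 1 - X 1)) / 2

/-- Conway symbol: `conwayA A B C = S_A = (b^2 + c^2 - a^2)/2`. -/
def conwayA (X Y Z : Pt) : ℝ :=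
  (dist Z X ^ 2 + dist X Y ^ 2 - dist Y Z ^ 2) / 2

/-- The bilinear form given by the metric matrix K = diag (S_A, S_B, S_C). -/
def Kf (A B C : Pt) (u v : Fin 3 → ℝ) : ℝ :=
  conwayA A B C * u 0 * v 0 + conwayA B C A * u 1 * v 1 + conwayA C A B * u 2 * v 2

/-- The point with (normalized) barycentric coordinates `u` w.r.t. A, B, C. -/
def bary (A B C : Pt) (u : Fin 3 → ℝ) : Pt :=
  u 0 • A + u 1 • B + u 2 • C

lemma dsq (P Q : Pt) : dist P Q ^ 2 = (P 0 - Q 0)^2 + (P 1 - Q 1)^2 := by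
  rw [EuclideanSpace.dist_eq, Real.sq_sqrt (by positivity)]
  simp [Fin.sum_univ_two, Real.dist_eq, sq_abs]

lemma inn (u v : Pt) : ⟪u, v⟫ = u 0 * v 0 + u 1 * v 1 := by
  simp [PiLp.inner_apply, RCLike.inner_apply, Fin.sum_univ_two]; ring

theorem stmt10 (A B C O Hpt : Pt) (h : sArea A B C ≠ 0)
    (hO : dist O A = dist O B ∧ dist O B = dist O C)
    (hH1 : ⟪Hpt - A, C - B⟫ = 0) (hH2 : ⟪Hpt - B, A - C⟫ = 0)
    (hH3 : ⟪Hpt - C, B - A⟫ = 0)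
    (N : Pt) (hN : N = midpoint ℝ O Hpt) (R : ℝ) (hR : R = dist O A)
    (X : Fin 3 → ℝ) (Xpt : Pt) (hX1 : X 0 + X 1 + X 2 = 1)
    (hXpt : Xpt = bary A B C X) :
    dist Xpt N = R / 2 ↔
      Kf A B C X X - (3 / 2) * Kf A B C ![1 / 3, 1 / 3, 1 / 3] X = 0 := by
  have hd : (B 0 - A 0) * (C 1 - A 1) - (C 0 - A 0) * (B 1 - A 1) ≠ 0 := by
    intro hz
    apply h
    unfold sArea
    rw [hz]; norm_num
  have e1 : (O 0 - A 0)^2 + (O 1 - A 1)^2 = (O 0 - B 0)^2 + (O 1 - B 1)^2 := by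
    rw [← dsq, ← dsq, hO.1]
  have e2 : (O 0 - B 0)^2 + (O 1 - B 1)^2 = (O 0 - C 0)^2 + (O 1 - C 1)^2 := by
    rw [← dsq, ← dsq, hO.2]
  have q1 : (Hpt 0 - A 0) * (C 0 - B 0) + (Hpt 1 - A 1) * (C 1 - B 1) = 0 := by
    rw [inn] at hH1; simpa using hH1
  have q2 : (Hpt 0 - B 0) * (A 0 - C 0) + (Hpt 1 - B 1) * (A 1 - C 1) = 0 := by
    rw [inn] at hH2; simpa using hH2
  have h0eq : Hpt 0 = A 0 + B 0 + C 0 - 2 * O 0 := by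
    have key0 : (Hpt 0 - (A 0 + B 0 + C 0 - 2 * O 0)) *
        ((B 0 - A 0) * (C 1 - A 1) - (C 0 - A 0) * (B 1 - A 1)) = 0 := by
      linear_combination (A 1 - C 1) * q1 - (C 1 - B 1) * q2 + (C 1 - B 1) * e1 +
        (A 1 - B 1) * e2
    have := mul_eq_zero.mp key0
    rcases this with h' | h'
    · linarith [sub_eq_zero.mp h']
    · exact absurd h' hd
  have h1eq : Hpt 1 = A 1 + B 1 + C 1 - 2 * O 1 := by
    have key1 : (Hpt 1 - (A 1 + B 1 + C 1 - 2 * O 1)) *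
        ((B 0 - A 0) * (C 1 - A 1) - (C 0 - A 0) * (B 1 - A 1)) = 0 := by
      linear_combination (C 0 - B 0) * q2 - (A 0 - C 0) * q1 - (C 0 - B 0) * e1 +
        (B 0 - A 0) * e2
    have := mul_eq_zero.mp key1
    rcases this with h' | h'
    · linarith [sub_eq_zero.mp h']
    · exact absurd h' hd
  have hx0 : Xpt 0 = X 0 * A 0 + X 1 * B 0 + X 2 * C 0 := by rw [hXpt]; simp [bary]
  have hx1 : Xpt 1 = X 0 * A 1 + X 1 * B 1 + X 2 * C 1 := by rw [hXpt]; simp [bary]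
  have hn0 : N 0 = (O 0 + Hpt 0) / 2 := by
    rw [hN, midpoint_eq_smul_add]; simp; ring
  have hn1 : N 1 = (O 1 + Hpt 1) / 2 := by
    rw [hN, midpoint_eq_smul_add]; simp; ring
  have key : dist Xpt N ^ 2 = dist O A ^ 2 / 4 +
      (Kf A B C X X - (3 / 2) * Kf A B C ![1 / 3, 1 / 3, 1 / 3] X) := by
    simp only [Kf, conwayA, dsq, Matrix.cons_val_zero, Matrix.cons_val_one, Matrix.head_cons,
      Matrix.cons_val_two, Matrix.tail_cons, hx0, hx1, hn0, hn1, h0eq, h1eq]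
    refine mul_left_cancel₀ (c := _)
      (show (4 : ℝ) * ((B 0 - A 0) * (C 1 - A 1) - (C 0 - A 0) * (B 1 - A 1)) ≠ 0 by
        intro hz
        exact hd (by linarith)) ?_
    linear_combination ((2:ℝ) * B 1 * C 0 * X 0 + (-2:ℝ) * B 0 * C 1 * X 0 + (-2:ℝ) * A 1 * C 0 * X 0 + (2:ℝ) * A 1 * B 0 * X 0 + (2:ℝ) * A 0 * C 1 * X 0 + (-2:ℝ) * A 0 * B 1 * X 0) * e1 + ((-1:ℝ) * B 1 * C 0 + (2:ℝ) * B 1 * C 0 * X 1 + (2:ℝ) * B 1 * C 0 * X 0 + B 0 * C 1 + (-2:ℝ) * B 0 * C 1 * X 1 + (-2:ℝ) * B 0 * C 1 * X 0 + A 1 * C 0 + (-2:ℝ) * A 1 * C 0 * X 1 + (-2:ℝ) * A 1 * C 0 * X 0 + (-1:ℝ) * A 1 * B 0 + (2:ℝ) * A 1 * B 0 * X 1 + (2:ℝ) * A 1 * B 0 * X 0 + (-1:ℝ) * A 0 * C 1 + (2:ℝ) * A 0 * C 1 * X 1 + (2:ℝ) * A 0 * C 1 * X 0 + A 0 * B 1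 + (-2:ℝ) * A 0 * B 1 * X 1 + (-2:ℝ) * A 0 * B 1 * X 0) * e2 + (((-4:ℝ) * B 1 * C 0 + (4:ℝ) * B 0 * C 1 + (4:ℝ) * A 1 * C 0 + (-4:ℝ) * A 1 * B 0 + (-4:ℝ) * A 0 * C 1 + (4:ℝ) * A 0 * B 1) * (C 1 * O 1 + (-1/2:ℝ) * C 1 * C 1 + C 0 * O 0 + (-1/2:ℝ) * C 0 * C 0 + (-1/2:ℝ) * B 1 * C 1 + B 1 * C 1 * X 2 + B 1 * C 1 * X 1 + (-1:ℝ) * B 1 * C 1 * X 0 + (-1/2:ℝ) * B 0 * C 0 + B 0 * C 0 * X 2 + B 0 * C 0 * X 1 + (-1:ℝ) * B 0 * C 0 * X 0 + (-1/2:ℝ) * A 1 * C 1 + A 1 * C 1 * X 2 + (-1:ℝ) * A 1 * C 1 * X 1 + A 1 * C 1 * X 0 + (-1/2:ℝ) * A 1 * B 1 + (-1:ℝ) * A 1 * B 1 * X 2 + A 1 * B 1 * X 1 + A 1 * B 1 * X 0 + (-1/2:ℝ) * A 0 * C 0 + A 0 * C 0 * X 2 + (-1:ℝ) * A 0 * C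 0 * X 1 + A 0 * C 0 * X 0 + (-1/2:ℝ) * A 0 * B 0 + (-1:ℝ) * A 0 * B 0 * X 2 + A 0 * B 0 * X 1 + A 0 * B 0 * X 0)) * hX1
  have hR0 : 0 ≤ R := hR ▸ dist_nonneg
  constructor
  · intro hdist
    rw [hdist] at key
    rw [hR] at key
    linear_combination -key
  · intro hT
    rw [hT] at key
    have h2 : dist Xpt N ^ 2 = (R / 2) ^ 2 := by rw [hR]; rw [key]; ring
    exact (sq_eq_sq₀ dist_nonneg (by linarith)).mp h2
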